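/- Let m ≥ 2 be an even integer and let a be a positive integer with gcd(a,m) = 1 (so a is odd). Then ∑_{x=1}^{(a−1)/2} ⌊2mx/a⌋ + ∑_{y=1}^{m} ⌊ay/(2m)⌋ = (a−1)m/2. -/
import Mathlib

open Finset

/-- Let `m ≥ 2` be an even integer and `a` a positive integer with `gcd(a,m) = 1`
(so `a` is odd).  Then `∑_{x=1}^{(a-1)/2} ⌊2mx/a⌋ + ∑_{y=1}^{m} ⌊ay/(2m)⌋ = (a-1)m/2`. -/
theorem stmt5 (m a : ℕ) (hm : 2 ≤ m) (hmeven : Even m) (ha : 0 < a)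
    (hcop : Nat.Coprime a m) :
    (∑ x ∈ Finset.Icc 1 ((a - 1) / 2), ⌊(2 * (m : ℚ) * (x : ℚ)) / (a : ℚ)⌋) +
      (∑ y ∈ Finset.Icc 1 m, ⌊((a : ℚ) * (y : ℚ)) / (2 * (m : ℚ))⌋) =
      ((a : ℤ) - 1) * m / 2 := by
  have hm0 : 0 < m := by omega
  have hodd : Odd a := by
    rcases Nat.even_or_odd a with h | h
    · exfalso
      have h2 : (2 : ℕ) ∣ Nat.gcd a m := Nat.dvd_gcd h.two_dvd hmeven.two_dvd
      rw [hcop] at h2; omega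
    · exact h
  set n := (a - 1) / 2 with hn
  have han : a = 2 * n + 1 := by
    obtain ⟨k, hk⟩ := hodd; omega
  have hcop2 : Nat.Coprime a (2 * m) := by
    exact Nat.Coprime.mul_right (Odd.coprime_two_right hodd) hcop
  -- no equality on the line
  have hne : ∀ x : ℕ, 1 ≤ x → x ≤ n → ∀ y : ℕ, 2 * m * x ≠ a * y := by
    intro x hx1 hx2 y heq
    have hdvd : a ∣ 2 * m * x := ⟨y, heq⟩
    have : a ∣ x := (Nat.Coprime.dvd_of_dvd_mul_left hcop2 hdvd)
    have := Nat.le_of_dvd (by omega) this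
    omega
  -- step 1: floors to nat division
  have hfloor1 : ∀ x ∈ Finset.Icc 1 n, ⌊(2 * (m : ℚ) * (x : ℚ)) / (a : ℚ)⌋ = ((2 * m * x / a : ℕ) : ℤ) := by
    intro x hx
    have h1 : (2 * (m : ℚ) * (x : ℚ)) / (a : ℚ) = ((2 * m * x : ℕ) : ℚ) / ((a : ℕ) : ℚ) := by
      push_cast; ring
    rw [h1, ← Int.natCast_floor_eq_floor (by positivity), Nat.floor_div_eq_div]
  have hfloor2 : ∀ y ∈ Finset.Icc 1 m, ⌊((a : ℚ) * (y : ℚ)) / (2 * (m : ℚ))⌋ = ((a * y / (2 * m) : ℕ) : ℤ) := by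
    intro y hy
    have h1 : ((a : ℚ) * (y : ℚ)) / (2 * (m : ℚ)) = ((a * y : ℕ) : ℚ) / (((2 * m) : ℕ) : ℚ) := by
      push_cast; ring
    rw [h1, ← Int.natCast_floor_eq_floor (by positivity), Nat.floor_div_eq_div]
  rw [Finset.sum_congr rfl hfloor1, Finset.sum_congr rfl hfloor2]
  -- main nat identity
  have key : (∑ x ∈ Finset.Icc 1 n, 2 * m * x / a) + (∑ y ∈ Finset.Icc 1 m, a * y / (2 * m)) = n * m := by
    set S := Finset.Icc 1 n ×ˢ Finset.Icc 1 m with hS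
    set P : ℕ × ℕ → Prop := fun p => a * p.2 < 2 * m * p.1 with hP
    have hcard1 : (S.filter P).card = ∑ x ∈ Finset.Icc 1 n, 2 * m * x / a := by
      rw [Finset.card_filter, Finset.sum_product]
      refine Finset.sum_congr rfl fun x hx => ?_
      rw [Finset.mem_Icc] at hx
      have hbound : 2 * m * x / a ≤ m := by
        calc 2 * m * x / a ≤ m * a / a := Nat.div_le_div_right (by nlinarith [hx.2])
        _ = m := Nat.mul_div_cancel m ha
      rw [← Finset.card_filter]
      have : (Finset.Icc 1 m).filter (fun y => P (x, y)) = Finset.Icc 1 (2 * m * x / a) := by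
        ext y
        simp only [Finset.mem_filter, Finset.mem_Icc, hP]
        constructor
        · rintro ⟨⟨h1, h2⟩, h3⟩
          have hc : y * a = a * y := Nat.mul_comm y a
          exact ⟨h1, (Nat.le_div_iff_mul_le ha).2 (by omega)⟩
        · rintro ⟨h1, h2⟩
          have h3 : y * a ≤ 2 * m * x := (Nat.le_div_iff_mul_le ha).1 h2
          have h4 : a * y ≠ 2 * m * x := fun h => hne x hx.1 hx.2 y h.symm
          have hc : y * a = a * y := Nat.mul_comm y a
          exact ⟨⟨h1, le_trans h2 hbound⟩, by omega⟩
      rw [this, Nat.card_Icc]; simp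
    have hcard2 : (S.filter fun p => ¬ P p).card = ∑ y ∈ Finset.Icc 1 m, a * y / (2 * m) := by
      rw [Finset.card_filter, Finset.sum_product, Finset.sum_comm]
      refine Finset.sum_congr rfl fun y hy => ?_
      rw [Finset.mem_Icc] at hy
      have hbound : a * y / (2 * m) ≤ n := by
        calc a * y / (2 * m) ≤ a * m / (2 * m) := Nat.div_le_div_right (by nlinarith [hy.2])
        _ = a / 2 := Nat.mul_div_mul_right a 2 hm0
        _ = n := by omega
      rw [← Finset.card_filter]
      have : (Finset.Icc 1 n).filter (fun x => ¬ P (x, y)) = Finset.Icc 1 (a * y / (2 * m)) := by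
        ext x
        simp only [Finset.mem_filter, Finset.mem_Icc, hP, not_lt]
        constructor
        · rintro ⟨⟨h1, h2⟩, h3⟩
          have hne' : 2 * m * x ≠ a * y := hne x h1 h2 y
          have hc : x * (2 * m) = 2 * m * x := Nat.mul_comm x (2*m)
          refine ⟨h1, (Nat.le_div_iff_mul_le (by omega)).2 (by omega)⟩
        · rintro ⟨h1, h2⟩
          have h3 : x * (2 * m) ≤ a * y := (Nat.le_div_iff_mul_le (by omega)).1 h2
          have h4 : 2 * m * x ≠ a * y := hne x h1 (le_trans h2 hbound) y
          have hc : x * (2 * m) = 2 * m * x := Nat.mul_comm x (2*m)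
          exact ⟨⟨h1, le_trans h2 hbound⟩, by omega⟩
      rw [this, Nat.card_Icc]; simp
    rw [← hcard1, ← hcard2, Finset.card_filter_add_card_filter_not, hS,
      Finset.card_product, Nat.card_Icc, Nat.card_Icc]
    simp
  rw [← Nat.cast_sum, ← Nat.cast_sum, ← Nat.cast_add, key]
  have haz : (a : ℤ) = 2 * n + 1 := by exact_mod_cast congrArg (Nat.cast : ℕ → ℤ) han
  rw [haz, show ((2:ℤ) * n + 1 - 1) * m = ((n : ℤ) * m) * 2 by ring,
    Int.mul_ediv_cancel _ two_ne_zero]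
  push_cast
  ring
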